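/- The continuous function f : [0,1] → ℝ defined by f(x) = √x · sin(1/x) for x > 0 and f(0) = 0 has the property that every extended real number is a right-hand sequential secant derivative of f at 0. -/

import Mathlib

open Filter Topology

/-- `L` is a right-hand sequential secant derivative at `0` of `f : [0,1] → ℝ`. -/
def IsRightSecantDeriv (f : ℝ → ℝ) (L : EReal) : Prop :=
  ∃ h : ℕ → ℝ, (∀ n, 0 < h n) ∧ (∀ n, h n ≤ 1) ∧ Tendsto h atTop (𝓝 0) ∧
    Tendsto (fun n => (((f (h n) - f 0) / h n : ℝ) : EReal)) atTop (𝓝 L)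

private noncomputable def F : ℝ → ℝ := fun x => if x = 0 then 0 else Real.sqrt x * Real.sin (1 / x)

private lemma sqrt_tendsto_atTop : Tendsto Real.sqrt atTop atTop :=
  tendsto_atTop_atTop.2 fun b =>
    ⟨b ^ 2, fun x hx => le_trans (le_abs_self b) (Real.abs_le_sqrt hx)⟩

private lemma F_secant {t : ℝ} (ht : 1 ≤ t) :
    (F (1 / t) - F 0) / (1 / t) = Real.sin t * Real.sqrt t := by
  have ht0 : (0:ℝ) < t := lt_of_lt_of_le one_pos ht
  have h1 : (1:ℝ) / t ≠ 0 := by positivity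
  have hF0 : F 0 = 0 := by simp [F]
  have hF : F (1 / t) = (Real.sqrt t)⁻¹ * Real.sin t := by
    rw [F, if_neg h1, one_div, Real.sqrt_inv, one_div, inv_inv]
  rw [hF0, hF, sub_zero]
  have hs : Real.sqrt t ^ 2 = t := Real.sq_sqrt ht0.le
  have hsne : Real.sqrt t ≠ 0 := by
    intro h; rw [h] at hs; simp at hs; exact ht0.ne' hs.symm
  field_simp
  linear_combination (-Real.sin t) * hs

private lemma secant_of_seq (t : ℕ → ℝ) (ht1 : ∀ n, 1 ≤ t n)
    (htop : Tendsto t atTop atTop) (L : EReal)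
    (hL : Tendsto (fun n => ((Real.sin (t n) * Real.sqrt (t n) : ℝ) : EReal)) atTop (𝓝 L)) :
    IsRightSecantDeriv F L := by
  refine ⟨fun n => 1 / t n, fun n => div_pos one_pos (lt_of_lt_of_le one_pos (ht1 n)),
    fun n => div_le_one_of_le₀ (ht1 n) (le_trans zero_le_one (ht1 n)), ?_, ?_⟩
  · simp only [one_div]; exact htop.inv_tendsto_atTop
  · simpa only [F_secant (ht1 _)] using hL

private lemma t_aux_sin (n : ℕ) : Real.sin (Real.pi / 2 + n * (2 * Real.pi)) = 1 := by
  rw [Real.sin_add_nat_mul_two_pi, Real.sin_pi_div_two]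

private lemma t_aux_sin' (n : ℕ) :
    Real.sin ((Real.pi / 2 + n * (2 * Real.pi)) + Real.pi) = -1 := by
  rw [Real.sin_add_pi, t_aux_sin]

private lemma one_le_aux (n : ℕ) : (1:ℝ) ≤ Real.pi / 2 + n * (2 * Real.pi) := by
  have h := Real.pi_gt_three
  nlinarith [Nat.cast_nonneg (α := ℝ) n, Real.pi_pos]

private lemma aux_tendsto : Tendsto (fun n : ℕ => Real.pi / 2 + n * (2 * Real.pi)) atTop atTop := by
  apply tendsto_atTop_add_const_left
  exact Tendsto.atTop_mul_const (by positivity) tendsto_natCast_atTop_atTop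

theorem sqrt_sin_all_secant_derivs :
    ContinuousOn (fun x : ℝ => if x = 0 then 0 else Real.sqrt x * Real.sin (1 / x))
      (Set.Icc 0 1) ∧
    ∀ L : EReal,
      IsRightSecantDeriv (fun x : ℝ => if x = 0 then 0 else Real.sqrt x * Real.sin (1 / x)) L := by
  constructor
  · -- continuity
    intro x hx
    rcases eq_or_ne x 0 with rfl | hx0
    · -- continuity at 0 via squeeze
      have hsq : Tendsto (fun y : ℝ => Real.sqrt y) (𝓝[Set.Icc (0:ℝ) 1] 0) (𝓝 0) := by
        have h1 : Tendsto (fun y : ℝ => Real.sqrt y) (𝓝 0) (𝓝 (Real.sqrt 0)) :=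
          Real.continuous_sqrt.tendsto 0
        rw [Real.sqrt_zero] at h1
        exact h1.mono_left nhdsWithin_le_nhds
      have hb : ∀ᶠ y in 𝓝[Set.Icc (0:ℝ) 1] 0,
          ‖(if y = 0 then 0 else Real.sqrt y * Real.sin (1 / y))‖ ≤ Real.sqrt y := by
        filter_upwards [self_mem_nhdsWithin] with y _
        rcases eq_or_ne y 0 with rfl | hy0
        · simp
        · rw [if_neg hy0, norm_mul, Real.norm_eq_abs, Real.norm_eq_abs,
            abs_of_nonneg (Real.sqrt_nonneg y)]
          calc Real.sqrt y * |Real.sin (1 / y)| ≤ Real.sqrt y * 1 :=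
                mul_le_mul_of_nonneg_left (Real.abs_sin_le_one _) (Real.sqrt_nonneg y)
            _ = Real.sqrt y := mul_one _
      have htend : Tendsto (fun y : ℝ => if y = 0 then 0 else Real.sqrt y * Real.sin (1 / y))
          (𝓝[Set.Icc (0:ℝ) 1] 0) (𝓝 0) := squeeze_zero_norm' hb hsq
      simpa [ContinuousWithinAt] using htend
    · -- continuity away from 0
      apply ContinuousAt.continuousWithinAt
      have hev : (fun y : ℝ => if y = 0 then 0 else Real.sqrt y * Real.sin (1 / y)) =ᶠ[𝓝 x]
          fun y => Real.sqrt y * Real.sin (1 / y) := by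
        filter_upwards [isOpen_ne.mem_nhds hx0] with y hy
        exact if_neg hy
      have hcont : ContinuousAt (fun y : ℝ => Real.sqrt y * Real.sin (1 / y)) x :=
        (Real.continuous_sqrt.continuousAt).mul
          (Real.continuous_sin.continuousAt.comp (continuousAt_const.div continuousAt_id hx0))
      exact hcont.congr hev.symm
  · -- all secant derivatives
    intro L
    show IsRightSecantDeriv F L
    induction L using EReal.rec with
    | bot =>
      refine secant_of_seq (fun n => (Real.pi / 2 + n * (2 * Real.pi)) + Real.pi)
        (fun n => le_trans (one_le_aux n) (le_add_of_nonneg_right Real.pi_pos.le))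
        (tendsto_atTop_add_const_right _ _ aux_tendsto) ⊥ ?_
      rw [EReal.tendsto_nhds_bot_iff_real]
      intro x
      have hsqrt : Tendsto (fun n : ℕ =>
          Real.sqrt ((Real.pi / 2 + n * (2 * Real.pi)) + Real.pi)) atTop atTop :=
        sqrt_tendsto_atTop.comp (tendsto_atTop_add_const_right _ _ aux_tendsto)
      filter_upwards [hsqrt.eventually_gt_atTop (-x)] with n hn
      rw [t_aux_sin', neg_one_mul]
      exact_mod_cast (by linarith : -Real.sqrt ((Real.pi / 2 + n * (2 * Real.pi)) + Real.pi) < x)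
    | top =>
      refine secant_of_seq (fun n => Real.pi / 2 + n * (2 * Real.pi)) one_le_aux aux_tendsto ⊤ ?_
      rw [EReal.tendsto_nhds_top_iff_real]
      intro x
      have hsqrt : Tendsto (fun n : ℕ => Real.sqrt (Real.pi / 2 + n * (2 * Real.pi))) atTop atTop :=
        sqrt_tendsto_atTop.comp aux_tendsto
      filter_upwards [hsqrt.eventually_gt_atTop x] with n hn
      rw [t_aux_sin, one_mul]
      exact_mod_cast hn
    | coe c =>
      -- find t n in each interval with sin t * √t = c, via IVT
      have key : ∀ n : ℕ, ∃ t : ℝ,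
          Real.pi / 2 + ((n + ⌈c ^ 2⌉₊ : ℕ) : ℝ) * (2 * Real.pi) ≤ t ∧
          Real.sin t * Real.sqrt t = c := by
        intro n
        set a : ℝ := Real.pi / 2 + ((n + ⌈c ^ 2⌉₊ : ℕ) : ℝ) * (2 * Real.pi) with ha
        set b : ℝ := a + Real.pi with hb
        have hab : a ≤ b := le_add_of_nonneg_right Real.pi_pos.le
        have hcont : ContinuousOn (fun t => Real.sin t * Real.sqrt t) (Set.Icc a b) :=
          (Real.continuous_sin.mul Real.continuous_sqrt).continuousOn
        have hc2a : c ^ 2 ≤ a := by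
          have h1 : (c ^ 2 : ℝ) ≤ (⌈c ^ 2⌉₊ : ℕ) := Nat.le_ceil _
          have h2 : ((⌈c ^ 2⌉₊ : ℕ) : ℝ) ≤ ((n + ⌈c ^ 2⌉₊ : ℕ) : ℝ) := by
            exact_mod_cast Nat.le_add_left _ _
          rw [ha]
          nlinarith [Real.pi_gt_three, Nat.cast_nonneg (α := ℝ) (n + ⌈c ^ 2⌉₊ : ℕ)]
        have habs : |c| ≤ Real.sqrt a := Real.abs_le_sqrt hc2a
        have hca : c ≤ Real.sin a * Real.sqrt a := by
          rw [ha, t_aux_sin, one_mul, ← ha]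
          exact le_trans (le_abs_self c) habs
        have hcb : Real.sin b * Real.sqrt b ≤ c := by
          rw [hb, ha, t_aux_sin', neg_one_mul, ← ha, ← hb]
          have h2 : Real.sqrt a ≤ Real.sqrt b :=
            Real.sqrt_le_sqrt hab
          have h3 : -c ≤ Real.sqrt a := le_trans (neg_le_abs c) habs
          linarith
        obtain ⟨t, ht, htc⟩ := intermediate_value_Icc' hab hcont ⟨hcb, hca⟩
        exact ⟨t, ht.1, htc⟩
      choose t ht htc using key
      refine secant_of_seq t (fun n => le_trans (one_le_aux _) (ht n)) ?_ (c : EReal) ?_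
      · apply tendsto_atTop_mono ht
        apply tendsto_atTop_add_const_left
        apply Tendsto.atTop_mul_const (by positivity)
        exact tendsto_natCast_atTop_atTop.comp (tendsto_add_atTop_nat _)
      · simp only [htc]
        exact tendsto_const_nhds
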